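/- (Theorem 2.) Let n_j : ℝ → E (j=1,…,N) be differentiable maps with derivatives ṅ_j such that {n_j(t)} is an orthonormal basis of E for every t. Suppose there exist complex constants c_{km} with ⟪n_k(t), ṅ_m(t)⟫ = c_{km} for all k, m and all t, and let θ ∈ ℝ be a single real constant with θ_j(t) = θ for all j and t. Then the shortcut Hamiltonian is time-independent: H_SA(t) = H_SA(0) for all t ∈ ℝ. -/

import Mathlib

/-- The rank-one operator `|u⟩⟨v| : z ↦ ⟪v, z⟫ • u`. -/
noncomputable def ketBra {E : Type*} [NormedAddCommGroup E] [InnerProductSpace ℂ E]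
    (u v : E) : E →L[ℂ] E :=
  (innerSL ℂ v).smulRight u

/-- The shortcut (transitionless) Hamiltonian
`H_SA(t) = i Σ_j ( |ṅ_j(t)⟩⟨n_j(t)| + i θ_j(t) |n_j(t)⟩⟨n_j(t)| )`. -/
noncomputable def HSA {E : Type*} [NormedAddCommGroup E] [InnerProductSpace ℂ E]
    {N : ℕ} (n n' : Fin N → ℝ → E) (θ : Fin N → ℝ → ℝ) (t : ℝ) : E →L[ℂ] E :=
  Complex.I • ∑ j : Fin N,
    (ketBra (n' j t) (n j t) + (Complex.I * (θ j t : ℂ)) • ketBra (n j t) (n j t))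

/-- Theorem 2: if all the matrix elements `⟪n_k(t), ṅ_m(t)⟫` are complex constants `c_{km}`
and all the phase functions are set to a single real constant `θ`, then the shortcut
Hamiltonian is time-independent: `H_SA(t) = H_SA(0)` for all `t`. -/
theorem shortcut_hamiltonian_time_independent
    {E : Type*} [NormedAddCommGroup E] [InnerProductSpace ℂ E] [FiniteDimensional ℂ E]
    {N : ℕ} (n n' : Fin N → ℝ → E) (θfun : Fin N → ℝ → ℝ)
    (hON : ∀ t : ℝ, Orthonormal ℂ (fun j : Fin N => n j t))
    (hspan : ∀ t : ℝ, Submodule.span ℂ (Set.range (fun j : Fin N => n j t)) = ⊤)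
    (hn : ∀ (j : Fin N) (t : ℝ), HasDerivAt (n j) (n' j t) t)
    (c : Fin N → Fin N → ℂ)
    (hc : ∀ (k m : Fin N) (t : ℝ), (inner ℂ (n k t) (n' m t) : ℂ) = c k m)
    (θ : ℝ) (hθ : ∀ (j : Fin N) (t : ℝ), θfun j t = θ) :
    ∀ t : ℝ, HSA n n' θfun t = HSA n n' θfun 0 := by
  -- orthonormal bases at each time
  have hbasis : ∀ t : ℝ, ∀ v : E, ∑ k : Fin N, (inner ℂ (n k t) v : ℂ) • n k t = v := by
    intro t v
    let b : OrthonormalBasis (Fin N) ℂ E :=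
      OrthonormalBasis.mk (hON t) (by rw [hspan t])
    have hb : ∀ k, b k = n k t := fun k => by
      simp [b, OrthonormalBasis.coe_mk]
    have := b.sum_repr v
    simp_rw [b.repr_apply_apply, hb] at this
    exact this
  -- expansion of the derivative in the moving basis
  have hexp : ∀ (j : Fin N) (t : ℝ), n' j t = ∑ k : Fin N, c k j • n k t := by
    intro j t
    have := hbasis t (n' j t)
    simp_rw [hc _ j t] at this
    exact this.symm
  -- antisymmetry of c
  have hanti : ∀ k j : Fin N, (starRingEnd ℂ) (c j k) = - c k j := by
    intro k j
    have h1 : HasDerivAt (fun t : ℝ => (inner ℂ (n k t) (n j t) : ℂ))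
        (inner ℂ (n k 0) (n' j 0) + inner ℂ (n' k 0) (n j 0)) 0 :=
      (hn k 0).inner ℂ (hn j 0)
    have h2 : (fun t : ℝ => (inner ℂ (n k t) (n j t) : ℂ)) =
        fun _ : ℝ => (if k = j then (1 : ℂ) else 0) := by
      funext t
      exact orthonormal_iff_ite.mp (hON t) k j
    have h3 : HasDerivAt (fun t : ℝ => (inner ℂ (n k t) (n j t) : ℂ)) 0 0 := by
      rw [h2]; exact hasDerivAt_const _ _
    have h4 := h1.unique h3
    have h5 : (inner ℂ (n' k 0) (n j 0) : ℂ) = (starRingEnd ℂ) (c j k) := by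
      rw [← inner_conj_symm, hc j k 0]
    rw [hc k j 0, h5] at h4
    linear_combination h4
  intro t
  ext z
  -- the moving sum
  set S : ℝ → E := fun s => ∑ j : Fin N, (inner ℂ (n j s) z : ℂ) • n' j s with hS
  -- S has zero derivative everywhere
  have hSd : ∀ s : ℝ, HasDerivAt S 0 s := by
    intro s
    have hterm : ∀ j : Fin N, HasDerivAt (fun u : ℝ => (inner ℂ (n j u) z : ℂ) • n' j u)
        ((inner ℂ (n j s) z : ℂ) • (∑ k : Fin N, c k j • n' k s)
          + (inner ℂ (n' j s) z : ℂ) • n' j s) s := by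
      intro j
      have hin : HasDerivAt (fun u : ℝ => (inner ℂ (n j u) z : ℂ)) (inner ℂ (n' j s) z) s := by
        have := (hn j s).inner ℂ (hasDerivAt_const s z)
        simpa using this
      have hdn' : HasDerivAt (n' j) (∑ k : Fin N, c k j • n' k s) s := by
        have heq : n' j = fun u => ∑ k : Fin N, c k j • n k u := by
          funext u; exact hexp j u
        rw [heq]
        exact HasDerivAt.fun_sum fun k _ => (hn k s).const_smul (c k j)
      exact hin.smul hdn'
    have hsum := HasDerivAt.fun_sum (fun j (_ : j ∈ Finset.univ) => hterm j)
    have hzero : (∑ j : Fin N, ((inner ℂ (n j s) z : ℂ) • (∑ k : Fin N, c k j • n' k s)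
        + (inner ℂ (n' j s) z : ℂ) • n' j s)) = 0 := by
      have e1 : ∀ j : Fin N, (inner ℂ (n' j s) z : ℂ)
          = ∑ k : Fin N, (starRingEnd ℂ) (c k j) * inner ℂ (n k s) z := by
        intro j
        rw [hexp j s, sum_inner]
        simp [inner_smul_left]
      calc (∑ j : Fin N, ((inner ℂ (n j s) z : ℂ) • (∑ k : Fin N, c k j • n' k s)
            + (inner ℂ (n' j s) z : ℂ) • n' j s))
          = (∑ j : Fin N, ∑ k : Fin N, ((inner ℂ (n j s) z : ℂ) * c k j) • n' k s)
            + ∑ j : Fin N, ∑ k : Fin N, ((starRingEnd ℂ) (c k j) * inner ℂ (n k s) z) • n' j s := by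
            rw [Finset.sum_add_distrib]
            congr 1
            · refine Finset.sum_congr rfl fun j _ => ?_
              rw [Finset.smul_sum]
              refine Finset.sum_congr rfl fun k _ => ?_
              rw [smul_smul]
            · refine Finset.sum_congr rfl fun j _ => ?_
              rw [e1 j, Finset.sum_smul]
        _ = 0 := by
            rw [Finset.sum_comm (s := Finset.univ) (t := Finset.univ)
              (f := fun j k => ((inner ℂ (n j s) z : ℂ) * c k j) • n' k s)]
            rw [← Finset.sum_add_distrib]
            refine Finset.sum_eq_zero fun j _ => ?_
            rw [← Finset.sum_add_distrib]
            refine Finset.sum_eq_zero fun k _ => ?_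
            rw [hanti j k]
            rw [← add_smul]
            convert zero_smul ℂ (n' j s)
            ring
    rw [hzero] at hsum
    exact hsum
  have hSconst : S t = S 0 := by
    have hdiff : Differentiable ℝ S := fun s => (hSd s).differentiableAt
    exact is_const_of_deriv_eq_zero hdiff (fun s => (hSd s).deriv) t 0
  -- evaluate HSA
  have happ : ∀ s : ℝ, HSA n n' θfun s z
      = Complex.I • (S s + (Complex.I * (θ : ℂ)) • z) := by
    intro s
    simp only [HSA, ketBra, ContinuousLinearMap.smul_apply, ContinuousLinearMap.sum_apply,
      ContinuousLinearMap.add_apply, ContinuousLinearMap.smulRight_apply, innerSL_apply_apply, hθ]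
    rw [Finset.sum_add_distrib]
    congr 1
    rw [← Finset.smul_sum, hbasis s z]
  rw [happ t, happ 0, hSconst]
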